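/- Let G be an abelian group, let n ≥ 1, let d_1, …, d_n be positive integers with g = d_1 + ⋯ + d_n, and partition the index set {1, …, 2g} into consecutive blocks B_1, …, B_n with |B_k| = 2d_k. Call a subset I ⊆ {1, …, 2g} a relation if |I ∩ B_k| = d_k for all k. Let x_1, …, x_{2g} ∈ G be such that the entries indexed by the last block B_n are pairwise distinct, and suppose ∑_{i=1}^{2g} x_i = 0. Then the number of relations I with ∑_{i ∈ I} x_i = 0 is at most (1/d_n) · ∏_{k=1}^{n} C(2d_k, d_k). -/

import Mathlib

theorem stmt_13 {G : Type*} [AddCommGroup G] [DecidableEq G]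
    (n : ℕ) (hn : 1 ≤ n) (d : ℕ → ℕ) (hd : ∀ k < n, 0 < d k)
    (g : ℕ) (hg : g = ∑ k ∈ Finset.range n, d k)
    (x : ℕ → G)
    (hsum : ∑ i ∈ Finset.range (2 * g), x i = 0)
    (hinj : ∀ i ∈ Finset.Ico (2 * ∑ k ∈ Finset.range (n - 1), d k) (2 * g),
            ∀ j ∈ Finset.Ico (2 * ∑ k ∈ Finset.range (n - 1), d k) (2 * g),
              x i = x j → i = j) :
    d (n - 1) *
      ((Finset.range (2 * g)).powerset.filter (fun I =>
        (∀ k < n,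
          (I ∩ Finset.Ico (2 * ∑ j ∈ Finset.range k, d j)
              (2 * ∑ j ∈ Finset.range (k + 1), d j)).card = d k) ∧
        ∑ i ∈ I, x i = 0)).card
      ≤ ∏ k ∈ Finset.range n, Nat.choose (2 * d k) (d k) := by
  classical
  set A : ℕ → ℕ := fun k => 2 * ∑ j ∈ Finset.range k, d j with hA
  have hAdef : ∀ k, (2 * ∑ j ∈ Finset.range k, d j) = A k := fun _ => rfl
  simp only [hAdef] at hinj ⊢
  have h2g : 2 * g = A n := by rw [hg]
  rw [h2g] at hinj
  have hAsucc : ∀ k, A (k + 1) = A k + 2 * d k := by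
    intro k
    simp [hA, Finset.sum_range_succ, Nat.mul_add]
  have hAmono : Monotone A := by
    intro a b hab
    exact Nat.mul_le_mul_left 2 (Finset.sum_le_sum_of_subset (Finset.range_subset_range.2 hab))
  have hn1 : n - 1 + 1 = n := by omega
  have hdpos : 0 < d (n - 1) := hd (n - 1) (by omega)
  have hAn : A n = A (n - 1) + 2 * d (n - 1) := by
    conv_lhs => rw [← hn1]
    rw [hAsucc]
  set last : ℕ := 2 * g - 1 with hlastdef
  have hlastmem : last ∈ Finset.Ico (A (n - 1)) (A n) := by
    rw [Finset.mem_Ico]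
    omega
  have hblock : ∀ i, i < A n → ∃ k, k < n ∧ i ∈ Finset.Ico (A k) (A (k + 1)) := by
    have H : ∀ m, ∀ i, i < A m → ∃ k, k < m ∧ i ∈ Finset.Ico (A k) (A (k + 1)) := by
      intro m
      induction m with
      | zero => intro i hi; rw [hA] at hi; simp at hi
      | succ m ih =>
        intro i hi
        by_cases h : i < A m
        · obtain ⟨k, hk, hmem⟩ := ih i h
          exact ⟨k, by omega, hmem⟩
        · exact ⟨m, by omega, Finset.mem_Ico.2 ⟨by omega, hi⟩⟩
    exact H n
  set S := (Finset.range (2 * g)).powerset.filter (fun I =>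
      (∀ k < n, (I ∩ Finset.Ico (A k) (A (k + 1))).card = d k) ∧ ∑ i ∈ I, x i = 0) with hS
  set R := (Finset.range (2 * g)).powerset.filter (fun I =>
      ∀ k < n, (I ∩ Finset.Ico (A k) (A (k + 1))).card = d k) with hR
  -- Step 1 : R.card ≤ product of binomials
  have hRle : R.card ≤ ∏ k ∈ Finset.range n, Nat.choose (2 * d k) (d k) := by
    have h1 : R.card ≤ ((Finset.range n).pi
        (fun k => (Finset.Ico (A k) (A (k + 1))).powersetCard (d k))).card := by
      apply Finset.card_le_card_of_injOn
        (fun I => fun k _ => I ∩ Finset.Ico (A k) (A (k + 1)))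
      · intro I hI
        rw [Finset.mem_coe, Finset.mem_pi]
        intro k hk
        rw [Finset.mem_powersetCard]
        rw [Finset.mem_coe, hR, Finset.mem_filter] at hI
        exact ⟨Finset.inter_subset_right, hI.2 k (Finset.mem_range.1 hk)⟩
      · intro I hI J hJ hIJ
        simp only [Finset.coe_filter, Set.mem_setOf_eq, hR, Finset.mem_filter,
          Finset.mem_powerset] at hI hJ
        have heq : ∀ k, k < n → I ∩ Finset.Ico (A k) (A (k + 1))
            = J ∩ Finset.Ico (A k) (A (k + 1)) := by
          intro k hk
          exact congrFun (congrFun hIJ k) (Finset.mem_range.2 hk)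
        ext i
        constructor
        · intro hiI
          have hilt : i < 2 * g := Finset.mem_range.1 (hI.1 hiI)
          obtain ⟨k, hk, hmem⟩ := hblock i (by omega)
          have h2 : i ∈ J ∩ Finset.Ico (A k) (A (k + 1)) := by
            rw [← heq k hk]; exact Finset.mem_inter.2 ⟨hiI, hmem⟩
          exact (Finset.mem_inter.1 h2).1
        · intro hiJ
          have hilt : i < 2 * g := Finset.mem_range.1 (hJ.1 hiJ)
          obtain ⟨k, hk, hmem⟩ := hblock i (by omega)
          have h2 : i ∈ I ∩ Finset.Ico (A k) (A (k + 1)) := by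
            rw [heq k hk]; exact Finset.mem_inter.2 ⟨hiJ, hmem⟩
          exact (Finset.mem_inter.1 h2).1
    refine h1.trans (le_of_eq ?_)
    rw [Finset.card_pi]
    apply Finset.prod_congr rfl
    intro k hk
    rw [Finset.card_powersetCard, Nat.card_Ico]
    congr 1
    rw [hAsucc]
    omega
  -- facts about members of S
  have hSsub : ∀ I ∈ S, I ⊆ Finset.range (2 * g) ∧
      (∀ k < n, (I ∩ Finset.Ico (A k) (A (k + 1))).card = d k) ∧ ∑ i ∈ I, x i = 0 := by
    intro I hI
    rw [hS, Finset.mem_filter, Finset.mem_powerset] at hI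
    exact ⟨hI.1, hI.2.1, hI.2.2⟩
  -- swapping lemma
  have hswap : ∀ I, I ∈ S → ∀ a b, a ∈ Finset.Ico (A (n - 1)) (A n) →
      b ∈ Finset.Ico (A (n - 1)) (A n) → a ∉ I → b ∈ I →
      insert a (I.erase b) ∈ R ∧ ∑ i ∈ insert a (I.erase b), x i = x a - x b := by
    intro I hI a b ha hb haI hbI
    obtain ⟨hIsub, hIcard, hIsum⟩ := hSsub I hI
    have hab : a ≠ b := fun h => haI (h ▸ hbI)
    have haE : a ∉ I.erase b := fun h => haI (Finset.mem_of_mem_erase h)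
    constructor
    · rw [hR, Finset.mem_filter, Finset.mem_powerset]
      constructor
      · intro i hi
        rcases Finset.mem_insert.1 hi with rfl | hi
        · rw [Finset.mem_range]
          have := (Finset.mem_Ico.1 ha).2
          omega
        · exact hIsub (Finset.mem_of_mem_erase hi)
      · intro k hk
        by_cases hkn : k = n - 1
        · subst hkn
          rw [hn1]
          have hbmem : b ∈ I ∩ Finset.Ico (A (n - 1)) (A n) := Finset.mem_inter.2 ⟨hbI, hb⟩
          have h1 : insert a (I.erase b) ∩ Finset.Ico (A (n - 1)) (A n)
              = insert a ((I ∩ Finset.Ico (A (n - 1)) (A n)).erase b) := by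
            rw [Finset.insert_inter_of_mem ha, Finset.erase_inter]
          rw [h1]
          have haE2 : a ∉ (I ∩ Finset.Ico (A (n - 1)) (A n)).erase b := by
            intro h
            exact haI (Finset.mem_inter.1 (Finset.mem_of_mem_erase h)).1
          rw [Finset.card_insert_of_notMem haE2, Finset.card_erase_of_mem hbmem]
          have hc := hIcard (n - 1) (by omega)
          rw [hn1] at hc
          omega
        · have hkn' : k + 1 ≤ n - 1 := by omega
          have hA1 : A (k + 1) ≤ A (n - 1) := hAmono hkn'
          have hnota : a ∉ Finset.Ico (A k) (A (k + 1)) := by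
            rw [Finset.mem_Ico]
            have := (Finset.mem_Ico.1 ha).1
            omega
          have hnotb : b ∉ Finset.Ico (A k) (A (k + 1)) := by
            rw [Finset.mem_Ico]
            have := (Finset.mem_Ico.1 hb).1
            omega
          have h2 : insert a (I.erase b) ∩ Finset.Ico (A k) (A (k + 1))
              = I ∩ Finset.Ico (A k) (A (k + 1)) := by
            ext i
            simp only [Finset.mem_inter, Finset.mem_insert, Finset.mem_erase]
            constructor
            · rintro ⟨rfl | ⟨hib, hiI⟩, hiblk⟩
              · exact absurd hiblk hnota
              · exact ⟨hiI, hiblk⟩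
            · rintro ⟨hiI, hiblk⟩
              refine ⟨Or.inr ⟨?_, hiI⟩, hiblk⟩
              rintro rfl
              exact hnotb hiblk
          rw [h2]
          exact hIcard k hk
    · rw [Finset.sum_insert haE, Finset.sum_erase_eq_sub hbI, hIsum]
      abel
  -- the pair set P
  set P := S.biUnion (fun I => ((Finset.Ico (A (n - 1)) (A n)).filter
      (fun j => ((last ∈ I ∧ j ∉ I) ∨ (last ∉ I ∧ j ∈ I)))).image (fun j => (I, j))) with hP
  have hTcard : ∀ I ∈ S, ((Finset.Ico (A (n - 1)) (A n)).filter
      (fun j => ((last ∈ I ∧ j ∉ I) ∨ (last ∉ I ∧ j ∈ I)))).card = d (n - 1) := by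
    intro I hI
    obtain ⟨hIsub, hIcard, hIsum⟩ := hSsub I hI
    have hcardblk : (I ∩ Finset.Ico (A (n - 1)) (A n)).card = d (n - 1) := by
      have := hIcard (n - 1) (by omega)
      rwa [hn1] at this
    have hfin : ((Finset.Ico (A (n - 1)) (A n)).filter (fun j => j ∈ I)).card = d (n - 1) := by
      rw [← hcardblk]
      congr 1
      ext j
      simp only [Finset.mem_filter, Finset.mem_inter]
      tauto
    have htot : (Finset.Ico (A (n - 1)) (A n)).card = 2 * d (n - 1) := by
      rw [Nat.card_Ico]
      omega
    by_cases hl : last ∈ I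
    · have he : (Finset.Ico (A (n - 1)) (A n)).filter
          (fun j => ((last ∈ I ∧ j ∉ I) ∨ (last ∉ I ∧ j ∈ I)))
          = (Finset.Ico (A (n - 1)) (A n)).filter (fun j => ¬ j ∈ I) := by
        apply Finset.filter_congr
        intro j _
        simp [hl]
      rw [he]
      have h1 := Finset.card_filter_add_card_filter_not
        (s := Finset.Ico (A (n - 1)) (A n)) (p := fun j => j ∈ I)
      omega
    · have he : (Finset.Ico (A (n - 1)) (A n)).filter
          (fun j => ((last ∈ I ∧ j ∉ I) ∨ (last ∉ I ∧ j ∈ I)))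
          = (Finset.Ico (A (n - 1)) (A n)).filter (fun j => j ∈ I) := by
        apply Finset.filter_congr
        intro j _
        simp [hl]
      rw [he, hfin]
  have hPcard : P.card = d (n - 1) * S.card := by
    rw [hP, Finset.card_biUnion]
    · have hc : ∀ I ∈ S, (((Finset.Ico (A (n - 1)) (A n)).filter
          (fun j => ((last ∈ I ∧ j ∉ I) ∨ (last ∉ I ∧ j ∈ I)))).image
            (fun j => (I, j))).card = d (n - 1) := by
        intro I hI
        rw [Finset.card_image_of_injective _ (fun a b h => by simpa using h)]
        exact hTcard I hI
      rw [Finset.sum_congr rfl hc, Finset.sum_const, smul_eq_mul, mul_comm]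
    · intro I hI J hJ hne
      rw [Function.onFun, Finset.disjoint_left]
      intro p hp hq
      rw [Finset.mem_image] at hp hq
      obtain ⟨j, _, rfl⟩ := hp
      obtain ⟨j', _, h⟩ := hq
      exact hne (congrArg Prod.fst h).symm
  have hPmem : ∀ p ∈ P, p.1 ∈ S ∧ p.2 ∈ Finset.Ico (A (n - 1)) (A n) ∧
      ((last ∈ p.1 ∧ p.2 ∉ p.1) ∨ (last ∉ p.1 ∧ p.2 ∈ p.1)) := by
    intro p hp
    rw [hP, Finset.mem_biUnion] at hp
    obtain ⟨I, hI, hp⟩ := hp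
    rw [Finset.mem_image] at hp
    obtain ⟨j, hj, rfl⟩ := hp
    rw [Finset.mem_filter] at hj
    exact ⟨hI, hj.1, hj.2⟩
  -- main injection P → R
  have hPR : P.card ≤ R.card := by
    apply Finset.card_le_card_of_injOn
      (fun p => if last ∈ p.1 then insert p.2 (p.1.erase last) else insert last (p.1.erase p.2))
    · intro p hp
      obtain ⟨hpS, hpj, hcases⟩ := hPmem p hp
      rcases hcases with ⟨hl, hj⟩ | ⟨hl, hj⟩
      · simp only [hl, if_true]
        exact (hswap p.1 hpS p.2 last hpj hlastmem hj hl).1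
      · simp only [hl, if_false]
        exact (hswap p.1 hpS last p.2 hlastmem hpj hl hj).1
    · intro p hp q hq hpq
      simp only [Finset.mem_coe] at hp hq
      obtain ⟨hpS, hpj, hpc⟩ := hPmem p hp
      obtain ⟨hqS, hqj, hqc⟩ := hPmem q hq
      simp only at hpq
      have hjne : ∀ (r : Finset ℕ × ℕ), r.1 ∈ S → r.2 ∈ Finset.Ico (A (n - 1)) (A n) →
          ((last ∈ r.1 ∧ r.2 ∉ r.1) ∨ (last ∉ r.1 ∧ r.2 ∈ r.1)) → r.2 ≠ last := by
        rintro r _ _ (⟨hl, hj⟩ | ⟨hl, hj⟩) h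
        · exact hj (h ▸ hl)
        · exact hl (h ▸ hj)
      have hpne : p.2 ≠ last := hjne p hpS hpj hpc
      have hqne : q.2 ≠ last := hjne q hqS hqj hqc
      rcases hpc with ⟨hpl, hpj2⟩ | ⟨hpl, hpj2⟩ <;> rcases hqc with ⟨hql, hqj2⟩ | ⟨hql, hqj2⟩
      · -- both contain last
        simp only [hpl, hql, if_true] at hpq
        have hsp := (hswap p.1 hpS p.2 last hpj hlastmem hpj2 hpl).2
        have hsq := (hswap q.1 hqS q.2 last hqj hlastmem hqj2 hql).2
        have hxeq : x p.2 = x q.2 := by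
          have := hsp.symm.trans ((congrArg (fun s => ∑ i ∈ s, x i) hpq).trans hsq)
          exact sub_left_injective this
        have hjeq : p.2 = q.2 := hinj p.2 hpj q.2 hqj hxeq
        have h1 : p.1 = q.1 := by
          have hrp : p.1 = insert last ((insert p.2 (p.1.erase last)).erase p.2) := by
            rw [Finset.erase_insert (fun h => hpj2 (Finset.mem_of_mem_erase h)),
              Finset.insert_erase hpl]
          have hrq : q.1 = insert last ((insert q.2 (q.1.erase last)).erase q.2) := by
            rw [Finset.erase_insert (fun h => hqj2 (Finset.mem_of_mem_erase h)),
              Finset.insert_erase hql]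
          rw [hrp, hrq, hpq, hjeq]
        exact Prod.ext h1 hjeq
      · -- mixed : impossible
        exfalso
        simp only [hpl, hql, if_true, if_false] at hpq
        have hlnot : last ∉ insert p.2 (p.1.erase last) := by
          intro h
          rcases Finset.mem_insert.1 h with h | h
          · exact hpne h.symm
          · exact (Finset.mem_erase.1 h).1 rfl
        rw [hpq] at hlnot
        exact hlnot (Finset.mem_insert_self _ _)
      · -- mixed : impossible
        exfalso
        simp only [hpl, hql, if_true, if_false] at hpq
        have hlnot : last ∉ insert q.2 (q.1.erase last) := by
          intro h
          rcases Finset.mem_insert.1 h with h | h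
          · exact hqne h.symm
          · exact (Finset.mem_erase.1 h).1 rfl
        rw [← hpq] at hlnot
        exact hlnot (Finset.mem_insert_self _ _)
      · -- neither contains last
        simp only [hpl, hql, if_false] at hpq
        have hsp := (hswap p.1 hpS last p.2 hlastmem hpj hpl hpj2).2
        have hsq := (hswap q.1 hqS last q.2 hlastmem hqj hql hqj2).2
        have hxeq : x p.2 = x q.2 := by
          have := hsp.symm.trans ((congrArg (fun s => ∑ i ∈ s, x i) hpq).trans hsq)
          exact sub_right_injective this
        have hjeq : p.2 = q.2 := hinj p.2 hpj q.2 hqj hxeq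
        have h1 : p.1 = q.1 := by
          have hrp : p.1 = insert p.2 ((insert last (p.1.erase p.2)).erase last) := by
            rw [Finset.erase_insert (fun h => hpl (Finset.mem_of_mem_erase h)),
              Finset.insert_erase hpj2]
          have hrq : q.1 = insert q.2 ((insert last (q.1.erase q.2)).erase last) := by
            rw [Finset.erase_insert (fun h => hql (Finset.mem_of_mem_erase h)),
              Finset.insert_erase hqj2]
          rw [hrp, hrq, hpq, hjeq]
        exact Prod.ext h1 hjeq
  calc d (n - 1) * S.card = P.card := hPcard.symm
    _ ≤ R.card := hPR
    _ ≤ ∏ k ∈ Finset.range n, Nat.choose (2 * d k) (d k) := hRle
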